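/- Let (X,f) be a topological dynamical system. If (X,f) is an HY-system, then for every vector a = (a₁,…,a_r) of positive integers the system (X^r, f^{a₁} × f^{a₂} × ⋯ × f^{a_r}) is an HY-system. In particular, (X,f) is strongly multi-transitive. -/

import Mathlib

open Function Set Filter Topology MeasureTheory

/-- A topological dynamical system `f : X → X` is (topologically) transitive if for every
two non-empty open subsets `U`, `V` there exists `n ≥ 1` with `f^[n] '' U ∩ V ≠ ∅`. -/
def IsTopTransitive {X : Type*} [TopologicalSpace X] (f : X → X) : Prop :=
  ∀ U V : Set X, IsOpen U → IsOpen V → U.Nonempty → V.Nonempty →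
    ∃ n : ℕ, 1 ≤ n ∧ (f^[n] '' U ∩ V).Nonempty

/-- Multi-transitivity with respect to a vector `a = (a₁, …, a_r)`: the product system
`(X^r, f^{a₁} × ⋯ × f^{a_r})` is transitive. -/
def MultiTransWrt {X : Type*} [TopologicalSpace X] (f : X → X) {r : ℕ} (a : Fin r → ℕ) : Prop :=
  IsTopTransitive (fun x : Fin r → X => fun i => f^[a i] (x i))

/-- `(X, f)` is multi-transitive if it is multi-transitive with respect to `(1, 2, …, n)`
for every `n ≥ 1`. -/
def MultiTrans {X : Type*} [TopologicalSpace X] (f : X → X) : Prop :=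
  ∀ n : ℕ, 1 ≤ n → MultiTransWrt f (fun i : Fin n => (i : ℕ) + 1)

/-- `(X, f)` is strongly multi-transitive if it is multi-transitive with respect to every
vector of positive integers. -/
def StrongMultiTrans {X : Type*} [TopologicalSpace X] (f : X → X) : Prop :=
  ∀ r : ℕ, 1 ≤ r → ∀ a : Fin r → ℕ, (∀ i, 1 ≤ a i) → MultiTransWrt f a

/-- The hitting time set `N(U, V) = {n ≥ 1 : f^[n] '' U ∩ V ≠ ∅}`. -/
def HittingTimes {X : Type*} [TopologicalSpace X] (f : X → X) (U V : Set X) : Set ℕ :=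
  {n : ℕ | 1 ≤ n ∧ (f^[n] '' U ∩ V).Nonempty}

/-- `(X, f)` is totally transitive if `f^[n]` is transitive for every `n ≥ 1`. -/
def TotallyTrans {X : Type*} [TopologicalSpace X] (f : X → X) : Prop :=
  ∀ n : ℕ, 1 ≤ n → IsTopTransitive (f^[n])

/-- `(X, f)` has dense small periodic sets if every non-empty open set contains a non-empty
closed set invariant under some iterate `f^[k]`, `k ≥ 1`. -/
def DenseSmallPeriodicSets {X : Type*} [TopologicalSpace X] (f : X → X) : Prop :=
  ∀ U : Set X, IsOpen U → U.Nonempty →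
    ∃ Y : Set X, Y.Nonempty ∧ IsClosed Y ∧ Y ⊆ U ∧ ∃ k : ℕ, 1 ≤ k ∧ f^[k] '' Y ⊆ Y

/-- An HY-system is a totally transitive system with dense small periodic sets. -/
def HYSystem {X : Type*} [TopologicalSpace X] (f : X → X) : Prop :=
  TotallyTrans f ∧ DenseSmallPeriodicSets f

set_option linter.unusedSectionVars false
set_option maxHeartbeats 1000000

namespace HYAux


/-- Thickly syndetic subsets of ℕ: for every window length `N`, the starting points of
intervals of length `N+1` contained in `S` form a syndetic set (gaps bounded by `G`). -/
def ts (S : Set ℕ) : Prop :=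
  ∀ N : ℕ, ∃ G : ℕ, ∀ a : ℕ, ∃ n : ℕ, a ≤ n ∧ n ≤ a + G ∧ ∀ j ≤ N, n + j ∈ S

theorem ts_mono {S T : Set ℕ} (h : S ⊆ T) (hS : ts S) : ts T := by
  intro N; obtain ⟨G, hG⟩ := hS N
  exact ⟨G, fun a => by obtain ⟨n, h1, h2, h3⟩ := hG a; exact ⟨n, h1, h2, fun j hj => h (h3 j hj)⟩⟩

theorem ts_inter {S T : Set ℕ} (hS : ts S) (hT : ts T) : ts (S ∩ T) := by
  intro N
  obtain ⟨G₁, h₁⟩ := hS N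
  obtain ⟨G₂, h₂⟩ := hT (N + G₁)
  refine ⟨G₂ + G₁, fun a => ?_⟩
  obtain ⟨n₂, hn₂a, hn₂b, hn₂⟩ := h₂ a
  obtain ⟨n₁, hn₁a, hn₁b, hn₁⟩ := h₁ n₂
  refine ⟨n₁, hn₂a.trans hn₁a, by omega, fun j hj => ⟨hn₁ j hj, ?_⟩⟩
  obtain ⟨d, hd⟩ := Nat.le.dest hn₁a
  have hmem := hn₂ (d + j) (by omega)
  have heq : n₂ + (d + j) = n₁ + j := by omega
  rwa [heq] at hmem

theorem ts_univ : ts (Set.univ : Set ℕ) := fun _ => ⟨0, fun a => ⟨a, le_rfl, by omega, fun _ _ => trivial⟩⟩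

theorem ts_scale {S : Set ℕ} (b : ℕ) (hb : 1 ≤ b) (hS : ts S) : ts {n | b * n ∈ S} := by
  intro N
  obtain ⟨G, hG⟩ := hS (b * N + b)
  refine ⟨G + b, fun a => ?_⟩
  obtain ⟨m, hma, hmb, hm⟩ := hG (b * a)
  set q := m / b with hqdef
  have hq : b * q + m % b = m := Nat.div_add_mod m b
  have hρ : m % b < b := Nat.mod_lt _ (by omega)
  refine ⟨q + 1, ?_, ?_, fun j hj => ?_⟩
  · -- a ≤ q + 1 : from b*a ≤ m < b*(q+1)
    by_contra hcon
    push_neg at hcon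
    have h1 : q + 2 ≤ a := by omega
    have h2 : b * (q + 2) ≤ b * a := Nat.mul_le_mul_left b h1
    have h3 : b * (q + 2) = b * q + b + b := by ring
    omega
  · -- q + 1 ≤ a + (G + b)
    have h2 : b * m ≤ b * (b * a + G) := Nat.mul_le_mul_left b hmb
    have h3 : b * q ≤ m := by omega
    -- b*(q+1) = b*q + b ≤ m + b ≤ b*a + G + b ≤ b*(a + G + b)
    have h4 : b * (q + 1) ≤ b * (a + (G + b)) := by
      have h5 : b * (q + 1) = b * q + b := by ring
      have h6 : b * (a + (G + b)) = b * a + b * G + b * b := by ring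
      have h7 : G ≤ b * G := Nat.le_mul_of_pos_left G (by omega)
      have h8 : b ≤ b * b := Nat.le_mul_of_pos_left b (by omega)
      omega
    exact (le_of_mul_le_mul_left h4 (by omega))
  · -- membership : b * ((q+1) + j) ∈ S
    have hjb : b * j ≤ b * N := Nat.mul_le_mul_left b hj
    have h1 : b * (q + 1 + j) = m + (b - m % b + b * j) := by
      have : b * (q + 1 + j) = b * q + b + b * j := by ring
      omega
    rw [Set.mem_setOf_eq, h1]
    exact hm _ (by omega)

theorem ts_nonempty {S : Set ℕ} (hS : ts S) : ∃ n, 1 ≤ n ∧ n ∈ S := by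
  obtain ⟨G, hG⟩ := hS 0
  obtain ⟨n, h1, _, h3⟩ := hG 1
  exact ⟨n, h1, by simpa using h3 0 le_rfl⟩

theorem ts_all {ι : Type*} (s : Finset ι) (P : ι → Set ℕ)
    (h : ∀ i ∈ s, ts (P i)) : ts {n | ∀ i ∈ s, n ∈ P i} := by
  classical
  induction s using Finset.induction_on with
  | empty => exact ts_mono (by intro n _; simp) ts_univ
  | @insert x s' hx ih =>
    have h1 : ts (P x) := h x (Finset.mem_insert_self x s')
    have h2 : ts {n | ∀ i ∈ s', n ∈ P i} := ih (fun i hi => h i (Finset.mem_insert_of_mem hi))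
    refine ts_mono ?_ (ts_inter h1 h2)
    rintro n ⟨hn1, hn2⟩ i hi
    rcases Finset.mem_insert.1 hi with rfl | hi'
    · exact hn1
    · exact hn2 i hi'

/-- points of a pointwise invariant set stay in it under iterates -/
theorem stay {Z : Type*} {g : Z → Z} {S : Set Z} (h : ∀ y ∈ S, g y ∈ S) :
    ∀ n, ∀ y ∈ S, g^[n] y ∈ S := by
  intro n
  induction n with
  | zero => simp only [Function.iterate_zero, id_eq]; exact fun y hy => hy
  | succ n ih =>
    intro y hy
    rw [Function.iterate_succ_apply']
    exact h _ (ih y hy)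

theorem stay_mul {Z : Type*} {g : Z → Z} {S : Set Z} (k : ℕ) (h : ∀ y ∈ S, g^[k] y ∈ S) :
    ∀ m, ∀ y ∈ S, g^[k * m] y ∈ S := by
  intro m y hy
  rw [Function.iterate_mul]
  exact stay h m y hy


section Part2
variable {Z : Type*} [TopologicalSpace Z]

/-- A nonempty closed invariant set which is minimal among such. -/
def MinOn (h : Z → Z) (M : Set Z) : Prop :=
  M.Nonempty ∧ IsClosed M ∧ (∀ y ∈ M, h y ∈ M) ∧
    ∀ C ⊆ M, C.Nonempty → IsClosed C → (∀ y ∈ C, h y ∈ C) → C = M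

theorem exists_minOn [CompactSpace Z] (h : Z → Z) {Y : Set Z}
    (hYne : Y.Nonempty) (hYc : IsClosed Y) (hYi : ∀ y ∈ Y, h y ∈ Y) :
    ∃ M, M ⊆ Y ∧ MinOn h M := by
  set S : Set (Set Z) := {C | C ⊆ Y ∧ C.Nonempty ∧ IsClosed C ∧ ∀ y ∈ C, h y ∈ C} with hS
  have hzorn := zorn_superset_nonempty S ?_ Y ⟨le_rfl, hYne, hYc, hYi⟩
  · obtain ⟨m, hmY, hmin⟩ := hzorn
    obtain ⟨⟨hm1, hm2, hm3, hm4⟩, hmin2⟩ := hmin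
    refine ⟨m, hm1, hm2, hm3, hm4, fun C hCm hC1 hC2 hC3 => ?_⟩
    have hCS : C ∈ S := ⟨hCm.trans hm1, hC1, hC2, hC3⟩
    exact le_antisymm hCm (hmin2 hCS hCm)
  · intro c hcS hchain hcne
    refine ⟨⋂₀ c, ?_, fun s hs => sInter_subset_of_mem hs⟩
    have hne : ∀ U ∈ c, U.Nonempty := fun U hU => (hcS hU).2.1
    have hcl : ∀ U ∈ c, IsClosed U := fun U hU => (hcS hU).2.2.1
    have hnonempty : (⋂₀ c).Nonempty := by
      haveI : Nonempty ↑c := hcne.to_subtype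
      refine IsCompact.nonempty_sInter_of_directed_nonempty_isCompact_isClosed ?_ hne
        (fun U hU => (hcl U hU).isCompact) hcl
      intro x hx y hy
      rcases hchain.total hx hy with hxy | hyx
      · exact ⟨x, hx, le_rfl, hxy⟩
      · exact ⟨y, hy, hyx, le_rfl⟩
    obtain ⟨C₀, hC₀⟩ := hcne
    refine ⟨(sInter_subset_of_mem hC₀).trans (hcS hC₀).1, hnonempty, isClosed_sInter hcl, ?_⟩
    intro y hy
    exact fun C hC => (hcS hC).2.2.2 y (hy C hC)

theorem minOn_hit [CompactSpace Z] {h : Z → Z} (hc : Continuous h) {M : Set Z}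
    (hM : MinOn h M) {W : Set Z} (hW : IsOpen W) (hWM : (W ∩ M).Nonempty) :
    ∃ G : ℕ, ∀ z ∈ M, ∃ s ≤ G, h^[s] z ∈ W := by
  obtain ⟨hMne, hMcl, hMinv, hMmin⟩ := hM
  have hcover : M ⊆ ⋃ s : ℕ, (h^[s]) ⁻¹' W := by
    by_contra hcon
    rw [Set.not_subset] at hcon
    obtain ⟨z, hzM, hz⟩ := hcon
    simp only [Set.mem_iUnion, Set.mem_preimage, not_exists] at hz
    set C : Set Z := M ∩ ⋂ s : ℕ, (h^[s]) ⁻¹' Wᶜ with hC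
    have hCeq : C = M := by
      refine hMmin C Set.inter_subset_left ⟨z, hzM, ?_⟩
        (hMcl.inter (isClosed_iInter fun s => (hW.isClosed_compl).preimage (hc.iterate s))) ?_
      · exact Set.mem_iInter.2 fun s => hz s
      · rintro y ⟨hyM, hyI⟩
        refine ⟨hMinv y hyM, Set.mem_iInter.2 fun s => ?_⟩
        have := Set.mem_iInter.1 hyI (s + 1)
        simpa [Function.iterate_succ_apply] using this
    obtain ⟨w, hwW, hwM⟩ := hWM
    have hwC : w ∈ C := hCeq.symm ▸ hwM
    have := Set.mem_iInter.1 hwC.2 0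
    simp at this
    exact this hwW
  obtain ⟨t, ht⟩ := (hMcl.isCompact).elim_finite_subcover
    (fun s : ℕ => (h^[s]) ⁻¹' W) (fun s => hW.preimage (hc.iterate s)) hcover
  refine ⟨t.sup id, fun z hz => ?_⟩
  have := ht hz
  simp only [Set.mem_iUnion, Set.mem_preimage] at this
  obtain ⟨s, hst, hsw⟩ := this
  exact ⟨s, Finset.le_sup (f := id) hst, hsw⟩

theorem minOn_pow [CompactSpace Z] [T2Space Z] {h : Z → Z} (hc : Continuous h) {M : Set Z}
    (hM : MinOn h M) (p : ℕ) (hp : 1 ≤ p) {x : Z} (hx : x ∈ M) :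
    ∃ M', x ∈ M' ∧ M' ⊆ M ∧ MinOn (h^[p]) M' := by
  classical
  obtain ⟨hMne, hMcl, hMinv, hMmin⟩ := hM
  obtain ⟨N₀, hN₀M, hN₀ne, hN₀cl, hN₀inv, hN₀min⟩ :=
    exists_minOn (h^[p]) hMne hMcl (fun y hy => HYAux.stay hMinv p y hy)
  have hN₀cp : IsCompact N₀ := hN₀cl.isCompact
  set D : Set Z := ⋃ j ∈ Finset.range p, h^[j] '' N₀ with hD
  have hDM : D ⊆ M := by
    intro z hz
    simp only [hD, Set.mem_iUnion] at hz
    obtain ⟨j, _, w, hwN, rfl⟩ := hz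
    exact HYAux.stay hMinv j w (hN₀M hwN)
  have hDcl : IsClosed D := by
    refine Set.Finite.isClosed_biUnion (Finset.finite_toSet _) fun j _ => ?_
    exact (hN₀cp.image (hc.iterate j)).isClosed
  have hDne : D.Nonempty := by
    obtain ⟨w, hw⟩ := hN₀ne
    exact ⟨w, Set.mem_biUnion (Finset.mem_range.2 hp) ⟨w, hw, by simp⟩⟩
  have hDinv : ∀ y ∈ D, h y ∈ D := by
    intro y hy
    simp only [hD, Set.mem_iUnion] at hy ⊢
    obtain ⟨j, hj, w, hwN, rfl⟩ := hy
    rw [Finset.mem_range] at hj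
    have hstep : h (h^[j] w) = h^[j+1] w := (Function.iterate_succ_apply' h j w).symm
    rcases Nat.lt_or_ge (j + 1) p with hlt | hge
    · exact ⟨j + 1, Finset.mem_range.2 hlt, w, hwN, hstep.symm⟩
    · have hjeq : j + 1 = p := by omega
      refine ⟨0, Finset.mem_range.2 hp, h^[p] w, hN₀inv w hwN, ?_⟩
      simp [hstep, hjeq]
  have hDeq : D = M := hMmin D hDM hDne hDcl hDinv
  have hxD : x ∈ D := hDeq.symm ▸ hx
  simp only [hD, Set.mem_iUnion] at hxD
  obtain ⟨j, hj, hxj⟩ := hxD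
  refine ⟨h^[j] '' N₀, hxj, ?_, ?_, (hN₀cp.image (hc.iterate j)).isClosed, ?_, ?_⟩
  · intro z hz
    obtain ⟨w, hwN, rfl⟩ := hz
    exact HYAux.stay hMinv j w (hN₀M hwN)
  · obtain ⟨w, hw⟩ := hN₀ne
    exact ⟨h^[j] w, ⟨w, hw, rfl⟩⟩
  · rintro z ⟨w, hwN, rfl⟩
    refine ⟨h^[p] w, hN₀inv w hwN, ?_⟩
    rw [← Function.iterate_add_apply, ← Function.iterate_add_apply, Nat.add_comm]
  · intro C hCM' hCne hCcl hCinv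
    set D' : Set Z := N₀ ∩ (h^[j]) ⁻¹' C with hD'
    have hD'eq : D' = N₀ := by
      refine hN₀min D' Set.inter_subset_left ?_ (hN₀cl.inter (hCcl.preimage (hc.iterate j))) ?_
      · obtain ⟨cpt, hcpt⟩ := hCne
        obtain ⟨w, hwN, rfl⟩ := hCM' hcpt
        exact ⟨w, hwN, hcpt⟩
      · rintro w ⟨hwN, hwC⟩
        refine ⟨hN₀inv w hwN, ?_⟩
        have hcomm : h^[j] (h^[p] w) = h^[p] (h^[j] w) := by
          rw [← Function.iterate_add_apply, ← Function.iterate_add_apply, Nat.add_comm]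
        simp only [Set.mem_preimage, hcomm]
        exact hCinv _ hwC
    refine le_antisymm hCM' ?_
    intro z hz
    obtain ⟨w, hwN, rfl⟩ := hz
    have : w ∈ D' := hD'eq.symm ▸ hwN
    exact this.2

end Part2

end HYAux
open HYAux
section Part3
variable {X : Type*} [TopologicalSpace X] [CompactSpace X] [T2Space X]
variable {f : X → X}

/-- The (unrestricted) hitting time set. -/
def NN (g : X → X) (U V : Set X) : Set ℕ := {n | (g^[n] '' U ∩ V).Nonempty}

theorem hit_of_mem {g : X → X} {U V : Set X} {n : ℕ} {u : X} (hu : u ∈ U)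
    (hv : g^[n] u ∈ V) : (g^[n] '' U ∩ V).Nonempty :=
  ⟨g^[n] u, ⟨u, hu, rfl⟩, hv⟩

theorem pre_of_hit {g : X → X} {U V : Set X} {n : ℕ} (h : (g^[n] '' U ∩ V).Nonempty) :
    ∃ u ∈ U, g^[n] u ∈ V := by
  obtain ⟨y, ⟨u, hu, rfl⟩, hv⟩ := h
  exact ⟨u, hu, hv⟩

theorem trans_surj (hf : Continuous f) (ht : IsTopTransitive f) : Function.Surjective f := by
  intro b
  by_contra hcon
  push_neg at hcon
  have hbr : b ∉ Set.range f := by rintro ⟨a, rfl⟩; exact hcon a rfl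
  have hrc : IsClosed (Set.range f) := (isCompact_range hf).isClosed
  obtain ⟨n, hn1, hne⟩ := ht Set.univ (Set.range f)ᶜ isOpen_univ hrc.isOpen_compl
    ⟨b, trivial⟩ ⟨b, hbr⟩
  obtain ⟨u, _, hv⟩ := pre_of_hit hne
  obtain ⟨m, rfl⟩ := Nat.exists_eq_add_of_le hn1
  exact hv ⟨f^[m] u, (Function.iterate_add_apply f 1 m u).symm⟩

theorem trans_mult (hT : TotallyTrans f) {K : ℕ} (hK : 1 ≤ K) {A B : Set X}
    (hA : IsOpen A) (hB : IsOpen B) (hAn : A.Nonempty) (hBn : B.Nonempty) :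
    ∃ t, 1 ≤ t ∧ (f^[K * t] '' A ∩ B).Nonempty := by
  obtain ⟨t, ht1, htne⟩ := hT K hK A B hA hB hAn hBn
  rw [← Function.iterate_mul] at htne
  exact ⟨t, ht1, htne⟩

/-- The key engine: a common hitting time (a multiple of any prescribed `k`)
for two pairs of open sets, in a totally transitive compact system with dense
small periodic sets. -/
theorem pair_hit (hf : Continuous f) (hT : TotallyTrans f) (hD : DenseSmallPeriodicSets f)
    {k : ℕ} (hk : 1 ≤ k) {A₀ B₀ A₁ B₁ : Set X}
    (hA₀ : IsOpen A₀) (hB₀ : IsOpen B₀) (hA₁ : IsOpen A₁) (hB₁ : IsOpen B₁)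
    (hA₀n : A₀.Nonempty) (hB₀n : B₀.Nonempty) (hA₁n : A₁.Nonempty) (hB₁n : B₁.Nonempty) :
    ∃ t, 1 ≤ t ∧ (f^[k * t] '' A₀ ∩ B₀).Nonempty ∧ (f^[k * t] '' A₁ ∩ B₁).Nonempty := by
  have hsurj : Function.Surjective f := by
    have h1 := hT 1 le_rfl
    rw [Function.iterate_one] at h1
    exact trans_surj hf h1
  -- Step 1 : a transfer time m = k * m₀ from A₁ into B₁
  obtain ⟨m₀, hm₀, hmne⟩ := trans_mult hT hk hA₁ hB₁ hA₁n hB₁n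
  set m : ℕ := k * m₀ with hmdef
  have hm1 : 1 ≤ m := Nat.mul_pos hk hm₀
  set U' : Set X := A₁ ∩ (f^[m]) ⁻¹' B₁ with hU'def
  have hU'open : IsOpen U' := hA₁.inter (hB₁.preimage (hf.iterate m))
  have hU'ne : U'.Nonempty := by
    obtain ⟨u, hu, hv⟩ := pre_of_hit hmne
    exact ⟨u, hu, hv⟩
  -- Step 2 : small periodic set inside U', and a minimal subset of it
  obtain ⟨Y, hYne, hYcl, hYU', kY, hkY, hYinv⟩ := hD U' hU'open hU'ne
  have hYinv' : ∀ y ∈ Y, f^[kY] y ∈ Y := fun y hy => hYinv ⟨y, hy, rfl⟩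
  obtain ⟨Zm, hZmY, hZmin⟩ := exists_minOn (f^[kY]) hYne hYcl hYinv'
  obtain ⟨y, hyZ⟩ := hZmin.1
  have hyU' : y ∈ U' := hYU' (hZmY hyZ)
  -- Step 3 : small periodic set inside B₀
  obtain ⟨Y₁, hY₁ne, _, hY₁B₀, k₁, hk₁, hY₁inv⟩ := hD B₀ hB₀ hB₀n
  have hY₁inv' : ∀ y ∈ Y₁, f^[k₁] y ∈ Y₁ := fun y hy => hY₁inv ⟨y, hy, rfl⟩
  obtain ⟨y₁, hy₁⟩ := hY₁ne
  -- Step 4 : y lies in a minimal set of f^[K], K = kY * (k₁ * k)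
  set K : ℕ := kY * (k₁ * k) with hKdef
  have hK1 : 1 ≤ K := Nat.mul_pos hkY (Nat.mul_pos hk₁ hk)
  obtain ⟨M', hyM', hM'Z, hM'min⟩ :=
    minOn_pow (hf.iterate kY) hZmin (k₁ * k) (Nat.mul_pos hk₁ hk) hyZ
  rw [← Function.iterate_mul] at hM'min
  -- Step 5 : syndetic returns of y to U' along multiples of K
  obtain ⟨G, hG⟩ := minOn_hit (hf.iterate K) hM'min hU'open ⟨y, hyU', hyM'⟩
  have hret : ∀ a : ℕ, ∃ s, a ≤ s ∧ s ≤ a + G ∧ f^[K * s] y ∈ U' := by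
    intro a
    have hz : (f^[K])^[a] y ∈ M' := HYAux.stay hM'min.2.2.1 a y hyM'
    obtain ⟨s', hs'G, hs'⟩ := hG _ hz
    rw [← Function.iterate_add_apply] at hs'
    refine ⟨s' + a, Nat.le_add_left _ _, by omega, ?_⟩
    rw [Function.iterate_mul]
    exact hs'
  -- Step 6 : a window neighbourhood of y₁ inside B₀ of length G (step K)
  set Wwin : Set X := ⋂ j ∈ Finset.range (G + 1), (f^[j * K]) ⁻¹' B₀ with hWdef
  have hWopen : IsOpen Wwin :=
    isOpen_biInter_finset fun j _ => hB₀.preimage (hf.iterate (j * K))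
  have hy₁W : y₁ ∈ Wwin := by
    refine Set.mem_iInter₂.2 fun j _ => ?_
    have : f^[k₁ * (j * (kY * k))] y₁ ∈ Y₁ := HYAux.stay_mul k₁ hY₁inv' _ y₁ hy₁
    have hexp : k₁ * (j * (kY * k)) = j * K := by rw [hKdef]; ring
    rw [hexp] at this
    exact hY₁B₀ this
  have hWne : Wwin.Nonempty := ⟨y₁, hy₁W⟩
  -- Step 7 : ρ and q
  set ρ : ℕ := m % K with hρdef
  set q : ℕ := m / K with hqdef
  have hdm : K * q + ρ = m := Nat.div_add_mod m K
  -- Step 8 : transitivity of f^[K*m] into (f^[ρ])⁻¹ Wwin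
  set T : Set X := (f^[ρ]) ⁻¹' Wwin with hTdef
  have hTopen : IsOpen T := hWopen.preimage (hf.iterate ρ)
  have hTne : T.Nonempty := by
    obtain ⟨x, hx⟩ := (hsurj.iterate ρ) y₁
    exact ⟨x, by simp [hTdef, Set.mem_preimage, hx, hy₁W]⟩
  obtain ⟨t', ht'1, ht'ne⟩ := trans_mult hT (K := K * m) (Nat.mul_pos hK1 hm1) hA₀ hTopen hA₀n hTne
  obtain ⟨u, huA₀, huT⟩ := pre_of_hit ht'ne
  have huW : f^[ρ + K * m * t'] u ∈ Wwin := by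
    rw [Function.iterate_add_apply]
    exact huT
  -- Step 9 : arithmetic set-up
  have hqle : q ≤ m * t' := le_trans (Nat.div_le_self m K) (Nat.le_mul_of_pos_right m ht'1)
  obtain ⟨d, hd⟩ := Nat.le.dest hqle    -- q + d = m * t'
  have hc : ρ + K * m * t' = m + K * d := by
    have h1 : K * m * t' = K * (m * t') := by ring
    have h2 : K * (m * t') = K * q + K * d := by rw [← hd]; ring
    omega
  rw [hc] at huW
  -- Step 10 : pick the return time
  obtain ⟨s, hds, hsG, hsy⟩ := hret d
  obtain ⟨j, hj⟩ := Nat.le.dest hds    -- d + j = s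
  have hjG : j ≤ G := by omega
  -- Step 11 : the common time n = m + K * s = k * t
  refine ⟨m₀ + kY * k₁ * s, hm₀.trans (Nat.le_add_right m₀ _), ?_, ?_⟩
  · -- hit for (A₀, B₀) with witness u
    have hkt : k * (m₀ + kY * k₁ * s) = j * K + (m + K * d) := by
      have h1 : k * (m₀ + kY * k₁ * s) = m + K * s := by rw [hmdef, hKdef]; ring
      have h2 : K * s = K * d + j * K := by rw [← hj]; ring
      omega
    rw [hkt]
    refine hit_of_mem huA₀ ?_
    rw [Function.iterate_add_apply]
    have := Set.mem_iInter₂.1 huW j (Finset.mem_range.2 (by omega))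
    exact this
  · -- hit for (A₁, B₁) with witness y
    have hkt : k * (m₀ + kY * k₁ * s) = m + K * s := by rw [hmdef, hKdef]; ring
    rw [hkt]
    refine hit_of_mem (Set.inter_subset_left hyU' : y ∈ A₁) ?_
    rw [Function.iterate_add_apply]
    exact Set.mem_preimage.1 (Set.inter_subset_right hsy)

end Part3

section Part4
variable {X : Type*} [TopologicalSpace X] [CompactSpace X] [T2Space X]
variable {f : X → X}

/-- Common hitting times (multiples of `k`) for finitely many pairs of open sets. -/
theorem fi_list (hf : Continuous f) (hT : TotallyTrans f) (hD : DenseSmallPeriodicSets f)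
    {k : ℕ} (hk : 1 ≤ k) :
    ∀ l : List (Set X × Set X),
      (∀ p ∈ l, IsOpen p.1 ∧ IsOpen p.2 ∧ p.1.Nonempty ∧ p.2.Nonempty) →
      ∃ t, 1 ≤ t ∧ ∀ p ∈ l, (f^[k * t] '' p.1 ∩ p.2).Nonempty := by
  suffices H : ∀ n (l : List (Set X × Set X)), l.length = n →
      (∀ p ∈ l, IsOpen p.1 ∧ IsOpen p.2 ∧ p.1.Nonempty ∧ p.2.Nonempty) →
      ∃ t, 1 ≤ t ∧ ∀ p ∈ l, (f^[k * t] '' p.1 ∩ p.2).Nonempty by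
    exact fun l hl => H l.length l rfl hl
  intro n
  induction n using Nat.strong_induction_on with
  | _ n ih =>
    intro l hlen hl
    cases l with
    | nil => exact ⟨1, le_rfl, by simp⟩
    | cons p l' =>
      cases l' with
      | nil =>
        obtain ⟨hp1, hp2, hp3, hp4⟩ := hl p (by simp)
        obtain ⟨t, ht1, htne⟩ := trans_mult hT hk hp1 hp2 hp3 hp4
        refine ⟨t, ht1, fun q hq => ?_⟩
        rw [List.mem_singleton] at hq
        exact hq ▸ htne
      | cons q rest =>
        obtain ⟨hp1, hp2, hp3, hp4⟩ := hl p (by simp)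
        obtain ⟨hq1, hq2, hq3, hq4⟩ := hl q (by simp)
        obtain ⟨m, hm1, hmA, hmB⟩ :=
          pair_hit hf hT hD le_rfl hp1 hq1 hp2 hq2 hp3 hq3 hp4 hq4
        rw [one_mul] at hmA hmB
        set p' : Set X × Set X :=
          (p.1 ∩ (f^[m]) ⁻¹' q.1, p.2 ∩ (f^[m]) ⁻¹' q.2) with hp'def
        have hp'1 : IsOpen p'.1 := hp1.inter (hq1.preimage (hf.iterate m))
        have hp'2 : IsOpen p'.2 := hp2.inter (hq2.preimage (hf.iterate m))
        have hp'3 : p'.1.Nonempty := by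
          obtain ⟨u, hu, hv⟩ := pre_of_hit hmA
          exact ⟨u, hu, hv⟩
        have hp'4 : p'.2.Nonempty := by
          obtain ⟨u, hu, hv⟩ := pre_of_hit hmB
          exact ⟨u, hu, hv⟩
        have hlen' : (p' :: rest).length < n := by
          simp only [List.length_cons] at hlen ⊢
          omega
        have hcond : ∀ r ∈ (p' :: rest),
            IsOpen r.1 ∧ IsOpen r.2 ∧ r.1.Nonempty ∧ r.2.Nonempty := by
          intro r hr
          rcases List.mem_cons.1 hr with rfl | hr'
          · exact ⟨hp'1, hp'2, hp'3, hp'4⟩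
          · exact hl r (List.mem_cons_of_mem _ (List.mem_cons_of_mem _ hr'))
        obtain ⟨t, ht1, ht⟩ := ih _ hlen' (p' :: rest) rfl hcond
        refine ⟨t, ht1, fun r hr => ?_⟩
        rcases List.mem_cons.1 hr with rfl | hr'
        · -- r = p
          obtain ⟨u, hu, hv⟩ := pre_of_hit (ht p' (by simp))
          exact hit_of_mem hu.1 hv.1
        rcases List.mem_cons.1 hr' with rfl | hr''
        · -- r = q
          obtain ⟨u, hu, hv⟩ := pre_of_hit (ht p' (by simp))
          refine hit_of_mem (Set.mem_preimage.1 hu.2) ?_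
          have h1 : f^[k * t] (f^[m] u) = f^[m] (f^[k * t] u) := by
            rw [← Function.iterate_add_apply, ← Function.iterate_add_apply, Nat.add_comm]
          rw [h1]
          exact Set.mem_preimage.1 hv.2
        · exact ht r (List.mem_cons_of_mem _ hr'')

theorem fi_fin (hf : Continuous f) (hT : TotallyTrans f) (hD : DenseSmallPeriodicSets f)
    {k : ℕ} (hk : 1 ≤ k) {r : ℕ} (A B : Fin r → Set X)
    (hA : ∀ i, IsOpen (A i)) (hB : ∀ i, IsOpen (B i))
    (hAn : ∀ i, (A i).Nonempty) (hBn : ∀ i, (B i).Nonempty) :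
    ∃ t, 1 ≤ t ∧ ∀ i, (f^[k * t] '' A i ∩ B i).Nonempty := by
  have hcond : ∀ p ∈ List.ofFn (fun i => (A i, B i)),
      IsOpen p.1 ∧ IsOpen p.2 ∧ p.1.Nonempty ∧ p.2.Nonempty := by
    intro p hp
    obtain ⟨i, rfl⟩ := List.mem_ofFn.1 hp
    exact ⟨hA i, hB i, hAn i, hBn i⟩
  obtain ⟨t, ht1, ht⟩ := fi_list hf hT hD hk (List.ofFn (fun i => (A i, B i))) hcond
  exact ⟨t, ht1, fun i => ht (A i, B i) (List.mem_ofFn.2 ⟨i, rfl⟩)⟩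

theorem pi_iterate {Y : Type*} (g : Y → Y) {r : ℕ} (b : Fin r → ℕ) (n : ℕ) (z : Fin r → Y) :
    (fun x : Fin r → Y => fun i => g^[b i] (x i))^[n] z = fun i => g^[b i * n] (z i) := by
  induction n with
  | zero => funext i; simp
  | succ n ih =>
    rw [Function.iterate_succ_apply', ih]
    funext i
    show g^[b i] (g^[b i * n] (z i)) = g^[b i * (n + 1)] (z i)
    rw [← Function.iterate_add_apply]
    congr 1
    ring

/-- Hitting time sets of an HY-system are thickly syndetic. -/
theorem ts_NN (hf : Continuous f) (hT : TotallyTrans f) (hD : DenseSmallPeriodicSets f)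
    {U V : Set X} (hU : IsOpen U) (hV : IsOpen V) (hUne : U.Nonempty) (hVne : V.Nonempty) :
    HYAux.ts (NN f U V) := by
  classical
  have hsurj : Function.Surjective f := by
    have h1 := hT 1 le_rfl
    rw [Function.iterate_one] at h1
    exact trans_surj hf h1
  intro N
  -- a common transfer time m for the pairs (U, f^[-j] V), j = 0..N
  obtain ⟨m, hm1, hmhits⟩ := fi_fin hf hT hD le_rfl (r := N + 1)
      (fun _ => U) (fun j => (f^[(j : ℕ)]) ⁻¹' V)
      (fun _ => hU) (fun j => hV.preimage (hf.iterate _))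
      (fun _ => hUne)
      (fun j => by
        obtain ⟨v, hv⟩ := hVne
        obtain ⟨x, hx⟩ := (hsurj.iterate (j : ℕ)) v
        exact ⟨x, by simp [Set.mem_preimage, hx, hv]⟩)
  rw [one_mul] at hmhits  -- now f^[m] hits
  set U' : Fin (N + 1) → Set X := fun j => U ∩ (f^[(j : ℕ) + m]) ⁻¹' V with hU'def
  have hU'open : ∀ j, IsOpen (U' j) := fun j => hU.inter (hV.preimage (hf.iterate _))
  have hU'ne : ∀ j, (U' j).Nonempty := by
    intro j
    obtain ⟨u, hu, hv⟩ := pre_of_hit (hmhits j)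
    refine ⟨u, hu, ?_⟩
    rw [Set.mem_preimage, Function.iterate_add_apply]
    exact hv
  -- small periodic sets inside each U' j
  choose Y hYne hYcl hYsub kk hkk hYinv using fun j => hD (U' j) (hU'open j) (hU'ne j)
  have hYinv' : ∀ j, ∀ y ∈ Y j, f^[kk j] y ∈ Y j := fun j y hy => hYinv j ⟨y, hy, rfl⟩
  set K₀ : ℕ := ∏ j, kk j with hK₀def
  have hK₀pos : 0 < K₀ :=
    Finset.prod_pos (fun i _ => Nat.lt_of_lt_of_le Nat.zero_lt_one (hkk i))
  have hK₀ : 1 ≤ K₀ := hK₀pos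
  -- the product system
  set g : (Fin (N + 1) → X) → (Fin (N + 1) → X) := fun z i => f^[1] (z i) with hgdef
  have hgc : Continuous g := continuous_pi fun i => (hf.iterate 1).comp (continuous_apply i)
  have hgit : ∀ (n : ℕ) (z : Fin (N + 1) → X), g^[n] z = fun i => f^[n] (z i) := by
    intro n z
    have := pi_iterate f (fun _ : Fin (N + 1) => 1) n z
    simpa [one_mul, hgdef] using this
  set Ytil : Set (Fin (N + 1) → X) := Set.pi Set.univ Y with hYtildef
  have hYtne : Ytil.Nonempty :=
    ⟨fun i => (hYne i).choose, fun i _ => (hYne i).choose_spec⟩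
  have hYtcl : IsClosed Ytil := isClosed_set_pi fun a _ => hYcl a
  have hYtinv : ∀ z ∈ Ytil, g^[K₀] z ∈ Ytil := by
    intro z hz i _
    rw [hgit]
    obtain ⟨c, hc⟩ := Finset.dvd_prod_of_mem kk (Finset.mem_univ i)
    rw [show K₀ = kk i * c from hc]
    exact HYAux.stay_mul (kk i) (hYinv' i) c (z i) (hz i (Set.mem_univ i))
  obtain ⟨Mt, hMtY, hMtmin⟩ := exists_minOn (g^[K₀]) hYtne hYtcl hYtinv
  obtain ⟨yt, hytM⟩ := hMtmin.1
  have hytY : yt ∈ Ytil := hMtY hytM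
  have hytU' : ∀ i, yt i ∈ U' i := fun i => hYsub i (hytY i (Set.mem_univ i))
  set Wt : Set (Fin (N + 1) → X) := Set.pi Set.univ U' with hWtdef
  have hWtopen : IsOpen Wt := isOpen_set_pi Set.finite_univ fun a _ => hU'open a
  have hytW : yt ∈ Wt := fun i _ => hytU' i
  obtain ⟨G, hG⟩ := minOn_hit (hgc.iterate K₀) hMtmin hWtopen ⟨yt, hytW, hytM⟩
  have hret : ∀ a : ℕ, ∃ s, a ≤ s ∧ s ≤ a + G ∧ ∀ i, f^[K₀ * s] (yt i) ∈ U' i := by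
    intro a
    have hz : (g^[K₀])^[a] yt ∈ Mt := HYAux.stay hMtmin.2.2.1 a yt hytM
    obtain ⟨s', hs'G, hs'⟩ := hG _ hz
    rw [← Function.iterate_add_apply] at hs'
    refine ⟨s' + a, Nat.le_add_left _ _, by omega, fun i => ?_⟩
    have h2 : g^[K₀ * (s' + a)] yt ∈ Wt := by
      rw [Function.iterate_mul]
      exact hs'
    have h3 := h2 i (Set.mem_univ i)
    rwa [hgit] at h3
  -- conclusion
  refine ⟨m + K₀ * (G + 1), fun a => ?_⟩
  have hq : K₀ * (a / K₀) + a % K₀ = a := Nat.div_add_mod a K₀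
  have hρ : a % K₀ < K₀ := Nat.mod_lt _ hK₀
  obtain ⟨s, hs1, hs2, hsmem⟩ := hret (a / K₀ + 1)
  refine ⟨m + K₀ * s, ?_, ?_, ?_⟩
  · calc a = K₀ * (a / K₀) + a % K₀ := hq.symm
      _ ≤ K₀ * (a / K₀) + K₀ := Nat.add_le_add_left hρ.le _
      _ = K₀ * (a / K₀ + 1) := by ring
      _ ≤ K₀ * s := Nat.mul_le_mul_left _ hs1
      _ ≤ m + K₀ * s := Nat.le_add_left _ _
  · calc m + K₀ * s ≤ m + K₀ * (a / K₀ + 1 + G) := by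
          exact Nat.add_le_add_left (Nat.mul_le_mul_left _ hs2) m
      _ = m + K₀ * (a / K₀) + K₀ * (G + 1) := by ring
      _ ≤ m + a + K₀ * (G + 1) := by
          have : K₀ * (a / K₀) ≤ a := Nat.le.intro hq
          omega
      _ = a + (m + K₀ * (G + 1)) := by ring
  · intro j hj
    set i : Fin (N + 1) := ⟨j, by omega⟩ with hidef
    have hmem := hsmem i
    have hUsub : U' i ⊆ U := Set.inter_subset_left
    have hpre : f^[K₀ * s] (yt i) ∈ (f^[(i : ℕ) + m]) ⁻¹' V := (hmem).2
    have hv : f^[((i : ℕ) + m) + K₀ * s] (yt i) ∈ V := by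
      rw [Function.iterate_add_apply]
      exact hpre
    have hexp : m + K₀ * s + j = ((i : ℕ) + m) + K₀ * s := by
      simp only [hidef]
      omega
    show (f^[m + K₀ * s + j] '' U ∩ V).Nonempty
    rw [hexp]
    exact hit_of_mem (hUsub (hytU' i)) hv

end Part4

section Part5
variable {X : Type*} [TopologicalSpace X] [CompactSpace X] [T2Space X]
variable {f : X → X}

theorem exists_box {r : ℕ} {U : Set (Fin r → X)} (hU : IsOpen U) {x : Fin r → X} (hx : x ∈ U) :
    ∃ u : Fin r → Set X, (∀ i, IsOpen (u i)) ∧ (∀ i, x i ∈ u i) ∧ Set.pi Set.univ u ⊆ U := by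
  classical
  obtain ⟨I, uu, huu, hsub⟩ := isOpen_pi_iff.1 hU x hx
  refine ⟨fun i => if i ∈ I then uu i else Set.univ, fun i => ?_, fun i => ?_, ?_⟩
  · by_cases h : i ∈ I
    · simpa [h] using (huu i h).1
    · simp [h]
  · by_cases h : i ∈ I
    · simpa [h] using (huu i h).2
    · simp [h]
  · refine subset_trans ?_ hsub
    intro z hz i hi
    have h1 : z i ∈ if i ∈ I then uu i else Set.univ := hz i (Set.mem_univ i)
    simp only [Finset.mem_coe] at hi
    rwa [if_pos hi] at h1

theorem prod_trans (hf : Continuous f) (hT : TotallyTrans f) (hD : DenseSmallPeriodicSets f)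
    {r : ℕ} (b : Fin r → ℕ) (hb : ∀ i, 1 ≤ b i) :
    IsTopTransitive (fun x : Fin r → X => fun i => f^[b i] (x i)) := by
  intro U V hU hV hUne hVne
  obtain ⟨x, hx⟩ := hUne
  obtain ⟨y, hy⟩ := hVne
  obtain ⟨u, huo, hxu, husub⟩ := exists_box hU hx
  obtain ⟨v, hvo, hyv, hvsub⟩ := exists_box hV hy
  have hts : HYAux.ts {n : ℕ | ∀ i ∈ Finset.univ, n ∈ {n : ℕ | b i * n ∈ NN f (u i) (v i)}} := by
    refine HYAux.ts_all Finset.univ _ fun i _ => ?_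
    exact HYAux.ts_scale (b i) (hb i)
      (ts_NN hf hT hD (huo i) (hvo i) ⟨x i, hxu i⟩ ⟨y i, hyv i⟩)
  obtain ⟨n, hn1, hn⟩ := HYAux.ts_nonempty hts
  have hn' : ∀ i, (f^[b i * n] '' (u i) ∩ (v i)).Nonempty :=
    fun i => hn i (Finset.mem_univ i)
  choose w hw1 hw2 using fun i => pre_of_hit (hn' i)
  refine ⟨n, hn1, ?_⟩
  refine ⟨(fun z : Fin r → X => fun i => f^[b i] (z i))^[n] w, ⟨w, ?_, rfl⟩, ?_⟩
  · exact husub fun i _ => hw1 i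
  · apply hvsub
    rw [pi_iterate f b n w]
    exact fun i _ => hw2 i

theorem prod_dsps (hD : DenseSmallPeriodicSets f) {r : ℕ} (a : Fin r → ℕ) :
    DenseSmallPeriodicSets (fun x : Fin r → X => fun i => f^[a i] (x i)) := by
  classical
  intro U hU hUne
  obtain ⟨x, hx⟩ := hUne
  obtain ⟨u, huo, hxu, husub⟩ := exists_box hU hx
  choose Y hYne hYcl hYsub kk hkk hYinv using fun i => hD (u i) (huo i) ⟨x i, hxu i⟩
  have hYinv' : ∀ i, ∀ z ∈ Y i, f^[kk i] z ∈ Y i := fun i z hz => hYinv i ⟨z, hz, rfl⟩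
  set K : ℕ := ∏ i, kk i with hKdef
  have hKpos : 0 < K := Finset.prod_pos fun i _ => Nat.lt_of_lt_of_le Nat.zero_lt_one (hkk i)
  refine ⟨Set.pi Set.univ Y,
    ⟨fun i => (hYne i).choose, fun i _ => (hYne i).choose_spec⟩,
    isClosed_set_pi fun i _ => hYcl i,
    subset_trans (Set.pi_mono fun i _ => hYsub i) husub, K, hKpos, ?_⟩
  rintro z ⟨w, hw, rfl⟩
  rw [pi_iterate f a K w]
  intro i _
  obtain ⟨c, hc⟩ := Finset.dvd_prod_of_mem kk (Finset.mem_univ i)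
  have hKc : K = kk i * c := hKdef.trans hc
  have hexp : a i * K = kk i * (a i * c) := by rw [hKc]; ring
  show f^[a i * K] (w i) ∈ Y i
  rw [hexp]
  exact HYAux.stay_mul (kk i) (hYinv' i) (a i * c) (w i) (hw i (Set.mem_univ i))

end Part5


theorem HYSystem_products_HYSystem
    {X : Type*} [MetricSpace X] [CompactSpace X] (f : X → X) (hf : Continuous f)
    (hHY : HYSystem f) :
    (∀ r : ℕ, 1 ≤ r → ∀ a : Fin r → ℕ, (∀ i, 1 ≤ a i) →
      HYSystem (fun x : Fin r → X => fun i => f^[a i] (x i))) ∧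
    StrongMultiTrans f := by
  obtain ⟨hT, hD⟩ := hHY
  constructor
  · intro r _ a ha
    constructor
    · intro n hn
      have heq : (fun x : Fin r → X => fun i => f^[a i] (x i))^[n]
          = fun x : Fin r → X => fun i => f^[a i * n] (x i) := by
        funext z
        exact pi_iterate f a n z
      rw [heq]
      exact prod_trans hf hT hD (fun i => a i * n) (fun i => Nat.mul_pos (ha i) hn)
    · exact prod_dsps hD a
  · intro r _ a ha
    exact prod_trans hf hT hD a ha
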